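/- Let W be symmetric with W𝟙 = 𝟙 and spectral radius of W restricted to 𝟙^⊥ equal to ρ < 1, and c ∈ (0, 1/2]. Set A := I − c(I − W) and B := c(I − W). Then A = Aᵀ, A𝟙 = 𝟙, B ⪰ 0, null(B) = span(𝟙), and I − A² − B ⪰ 0. -/

import Mathlib

open Matrix

/-- Let `W` be symmetric with `W𝟙 = 𝟙` and spectral radius on `𝟙^⊥` equal to
`ρ < 1` (expressed via the quadratic form bound on `𝟙^⊥`), and `c ∈ (0, 1/2]`. Then
`A = I − c(I − W)` and `B = c(I − W)` satisfy `A = Aᵀ`, `A𝟙 = 𝟙`, `B ⪰ 0`,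
`null(B) = span(𝟙)`, and `I − A² − B ⪰ 0` (Assumption 3 for NIDS/ED/D²). -/
theorem stmt_15 {n : ℕ} (W : Matrix (Fin n) (Fin n) ℝ)
    (hWsymm : Wᵀ = W)
    (hWone : W *ᵥ (1 : Fin n → ℝ) = 1)
    (ρ : ℝ) (hρ0 : 0 ≤ ρ) (hρ1 : ρ < 1)
    (hspec : ∀ v : Fin n → ℝ, v ⬝ᵥ (1 : Fin n → ℝ) = 0 →
      |v ⬝ᵥ (W *ᵥ v)| ≤ ρ * (v ⬝ᵥ v))
    (c : ℝ) (hc0 : 0 < c) (hc1 : c ≤ 1 / 2) :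
    (1 - c • (1 - W))ᵀ = 1 - c • (1 - W) ∧
    (1 - c • (1 - W)) *ᵥ (1 : Fin n → ℝ) = 1 ∧
    (c • (1 - W)).PosSemidef ∧
    (∀ v : Fin n → ℝ, (c • (1 - W)) *ᵥ v = 0 ↔ ∃ t : ℝ, v = t • (1 : Fin n → ℝ)) ∧
    (1 - (1 - c • (1 - W)) * (1 - c • (1 - W)) - c • (1 - W)).PosSemidef := by
  set B : Matrix (Fin n) (Fin n) ℝ := c • (1 - W) with hBdef
  have hBsym : Bᵀ = B := by
    simp [hBdef, transpose_smul, transpose_sub, hWsymm]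
  have hBherm : B.IsHermitian := by
    simpa [Matrix.IsHermitian, conjTranspose_eq_transpose_of_trivial] using hBsym
  -- decomposition of an arbitrary vector
  have hone : (1 : Fin n → ℝ) ⬝ᵥ (1 : Fin n → ℝ) = (n : ℝ) := by
    simp [dotProduct]
  have decomp : ∀ v : Fin n → ℝ, ∃ u : Fin n → ℝ, ∃ a : ℝ,
      u ⬝ᵥ (1 : Fin n → ℝ) = 0 ∧ v = u + a • (1 : Fin n → ℝ) := by
    intro v
    by_cases hn : (n : ℝ) = 0
    · refine ⟨v, 0, ?_, by simp⟩
      have hn0 : n = 0 := by exact_mod_cast hn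
      subst hn0
      simp [dotProduct]
    · refine ⟨v - ((v ⬝ᵥ 1) / n) • 1, (v ⬝ᵥ 1) / n, ?_, by abel⟩
      rw [sub_dotProduct, smul_dotProduct, hone]
      rw [smul_eq_mul, div_mul_cancel₀ _ hn, sub_self]
  -- quadratic form identities
  have hWu_perp : ∀ u : Fin n → ℝ, u ⬝ᵥ (1 : Fin n → ℝ) = 0 →
      (1 : Fin n → ℝ) ⬝ᵥ (W *ᵥ u) = 0 := by
    intro u hu
    rw [dotProduct_mulVec, ← hWsymm, vecMul_transpose, hWone, dotProduct_comm]
    exact hu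
  have quadW : ∀ (u : Fin n → ℝ) (a : ℝ), u ⬝ᵥ (1 : Fin n → ℝ) = 0 →
      (u + a • 1) ⬝ᵥ (W *ᵥ (u + a • 1)) = u ⬝ᵥ (W *ᵥ u) + a ^ 2 * n := by
    intro u a hu
    rw [mulVec_add, mulVec_smul, hWone]
    simp only [dotProduct_add, add_dotProduct, dotProduct_smul, smul_dotProduct,
      smul_eq_mul, hu, hWu_perp u hu, hone]
    ring
  have quadI : ∀ (u : Fin n → ℝ) (a : ℝ), u ⬝ᵥ (1 : Fin n → ℝ) = 0 →
      (u + a • 1) ⬝ᵥ (u + a • 1) = u ⬝ᵥ u + a ^ 2 * n := by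
    intro u a hu
    simp only [dotProduct_add, add_dotProduct, dotProduct_smul, smul_dotProduct,
      smul_eq_mul, hone]
    rw [dotProduct_comm (1 : Fin n → ℝ) u, hu]
    ring
  -- quadratic form of B
  have quadB : ∀ v : Fin n → ℝ, v ⬝ᵥ (B *ᵥ v) = c * (v ⬝ᵥ v - v ⬝ᵥ (W *ᵥ v)) := by
    intro v
    rw [hBdef, smul_mulVec, dotProduct_smul, sub_mulVec, one_mulVec,
      dotProduct_sub]
    simp [smul_eq_mul]
  -- B is PSD
  have hBpsd : B.PosSemidef := by
    refine posSemidef_iff_dotProduct_mulVec.mpr ⟨hBherm, fun v => ?_⟩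
    obtain ⟨u, a, hu, rfl⟩ := decomp v
    have h1 := hspec u hu
    have h2 : u ⬝ᵥ (W *ᵥ u) ≤ ρ * (u ⬝ᵥ u) := le_trans (le_abs_self _) h1
    have h3 : (0:ℝ) ≤ u ⬝ᵥ u := Finset.sum_nonneg fun i _ => mul_self_nonneg (u i)
    simp only [RCLike.re_to_real, star_trivial]
    rw [quadB, quadW u a hu, quadI u a hu]
    have h5 : u ⬝ᵥ (W *ᵥ u) ≤ u ⬝ᵥ u := h2.trans (by nlinarith)
    nlinarith [mul_nonneg hc0.le (sub_nonneg.mpr h5)]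
  -- 1 - B is PSD
  have hIBpsd : ((1 : Matrix (Fin n) (Fin n) ℝ) - B).PosSemidef := by
    rw [posSemidef_iff_dotProduct_mulVec]
    constructor
    · simp [Matrix.IsHermitian, conjTranspose_eq_transpose_of_trivial,
        transpose_sub, hBsym]
    · intro v
      obtain ⟨u, a, hu, rfl⟩ := decomp v
      have h1 := hspec u hu
      have h2 : -(ρ * (u ⬝ᵥ u)) ≤ u ⬝ᵥ (W *ᵥ u) := neg_le_of_abs_le h1
      have h3 : (0:ℝ) ≤ u ⬝ᵥ u := Finset.sum_nonneg fun i _ => mul_self_nonneg (u i)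
      have h4 : (0:ℝ) ≤ a ^ 2 * n := by positivity
      simp only [RCLike.re_to_real, star_trivial]
      rw [sub_mulVec, one_mulVec, dotProduct_sub, quadB, quadW u a hu,
        quadI u a hu]
      nlinarith [mul_le_mul_of_nonneg_left h2 hc0.le,
        mul_nonneg (sub_nonneg.mpr hc1) h3,
        mul_nonneg (mul_nonneg (sub_nonneg.mpr hc1) hρ0) h3,
        mul_nonneg (by linarith : (0:ℝ) ≤ 1 - ρ) h3]
  refine ⟨?_, ?_, hBpsd, ?_, ?_⟩
  · simp [transpose_sub, hBsym]
  · rw [sub_mulVec, one_mulVec, hBdef, smul_mulVec, sub_mulVec,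
      one_mulVec, hWone]
    simp
  · -- kernel of B
    intro v
    constructor
    · intro hv
      obtain ⟨u, a, hu, rfl⟩ := decomp v
      have hBv : B *ᵥ (u + a • 1) = c • (u - W *ᵥ u) := by
        rw [hBdef, smul_mulVec, sub_mulVec, one_mulVec, mulVec_add,
          mulVec_smul, hWone]
        congr 1
        abel
      rw [hBv] at hv
      have huW : u - W *ᵥ u = 0 := by
        have := smul_eq_zero.mp hv
        rcases this with h | h
        · exact absurd h (ne_of_gt hc0)
        · exact h
      have huW' : W *ᵥ u = u := by
        have := sub_eq_zero.mp huW
        exact this.symm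
      have h1 := hspec u hu
      rw [huW'] at h1
      have h3 : (0:ℝ) ≤ u ⬝ᵥ u := Finset.sum_nonneg fun i _ => mul_self_nonneg (u i)
      have h2 : u ⬝ᵥ u ≤ ρ * (u ⬝ᵥ u) := le_trans (le_abs_self _) h1
      have hu0 : u ⬝ᵥ u = 0 := by nlinarith
      have : u = 0 := dotProduct_self_eq_zero.mp hu0
      exact ⟨a, by simp [this]⟩
    · rintro ⟨t, rfl⟩
      rw [hBdef, smul_mulVec, mulVec_smul, sub_mulVec, one_mulVec, hWone]
      simp
  · -- 1 - A^2 - B is PSD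
    have key : (1 : Matrix (Fin n) (Fin n) ℝ) - (1 - B) * (1 - B) - B
        = B - B * B := by noncomm_ring
    rw [key]
    open scoped MatrixOrder in
    set S := CFC.sqrt B with hS
    open scoped MatrixOrder in
    have hSS : S * S = B := CFC.sqrt_mul_sqrt_self B hBpsd.nonneg
    open scoped MatrixOrder in
    have hSherm : Sᴴ = S := (CFC.sqrt_nonneg B).posSemidef.1
    have hfact : B - B * B = S * (1 - B) * Sᴴ := by
      rw [hSherm, ← hSS]
      noncomm_ring
    rw [hfact]
    exact hIBpsd.mul_mul_conjTranspose_same S
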